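/- Assume p and q are odd. Then there is no tuple (z, b, a, c), where z is a ρ-vector, b_1 ≥ … ≥ b_{q−1} ≥ 0 and a_1 ≥ … ≥ a_{p−1} ≥ 0 are integers, and c is a nonzero integer, satisfying z_i − 2b_i = q − i for all 1 ≤ i ≤ q−1, z_q + 2c = 0, z_{q+j} + 2a_{p−j} = −j for all 1 ≤ j ≤ p−1, together with either (c > 0 and (p = 1 or a_{p−1} ≥ c)) or (c < 0 and (q = 1 or b_{q−1} ≥ −c)): the number of such tuples is 0. -/

import Mathlib

/-- A solution for the Dirac cohomology multiplicity count of `X'(p,q;0,0)` for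
`Sp(2n,ℝ)`, `n = 2k−1 = p+q−1`, `p, q ≥ 1`: a ρ-vector `z` (strictly decreasing with
absolute values exactly `{1, …, n}`), weakly decreasing nonnegative integers
`b_1 ≥ … ≥ b_{q−1} ≥ 0`, `a_1 ≥ … ≥ a_{p−1} ≥ 0`, and a nonzero integer `c`, with
`z_i − 2b_i = q − i` for `1 ≤ i ≤ q−1`, `z_q + 2c = 0`, `z_{q+j} + 2a_{p−j} = −j` for
`1 ≤ j ≤ p−1`, and either (`c > 0` and (`p = 1` or `a_{p−1} ≥ c`)) or
(`c < 0` and (`q = 1` or `b_{q−1} ≥ −c`)) (written here with 0-based indices). -/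
structure RhoSol00' (n p q : ℕ) (hp : 1 ≤ p) (hq : 1 ≤ q) (hn : q - 1 + p = n) where
  z : Fin n → ℤ
  b : Fin (q - 1) → ℤ
  a : Fin (p - 1) → ℤ
  c : ℤ
  z_anti : StrictAnti z
  z_abs : Finset.univ.image (fun i => |z i|) = Finset.Icc (1 : ℤ) (n : ℤ)
  b_anti : Antitone b
  a_anti : Antitone a
  b_nonneg : ∀ i, 0 ≤ b i
  a_nonneg : ∀ m, 0 ≤ a m
  c_ne : c ≠ 0
  hzb : ∀ i : Fin (q - 1),
    z ⟨i.1, by have := i.isLt; omega⟩ - 2 * b i = (q : ℤ) - 1 - i.1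
  hzc : z ⟨q - 1, by omega⟩ + 2 * c = 0
  hza : ∀ j : Fin (p - 1),
    z ⟨q + j.1, by have := j.isLt; omega⟩ +
      2 * a ⟨p - 2 - j.1, by have := j.isLt; omega⟩ = -(j.1 : ℤ) - 1
  side : (0 < c ∧ (p = 1 ∨ ∃ h : 2 ≤ p, c ≤ a ⟨p - 2, by omega⟩)) ∨
    (c < 0 ∧ (q = 1 ∨ ∃ h : 2 ≤ q, -c ≤ b ⟨q - 2, by omega⟩))

theorem rhoSol00'_isEmpty (n p q : ℕ) (hp : 1 ≤ p) (hq : 1 ≤ q) (hnn : q - 1 + p = n)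
    (hpo : p % 2 = 1) (hqo : q % 2 = 1) :
    IsEmpty (RhoSol00' n p q hp hq hnn) := by
  have hn1 : 1 ≤ n := by omega
  constructor
  rintro ⟨z, b, a, c, z_anti, z_abs, b_anti, a_anti, b_nn, a_nn, c_ne, hzb, hzc, hza, hside⟩
  -- Every coordinate has the parity of q - 1 - i
  have hA : ∀ i : Fin n, ∃ e : ℤ, z i = (q : ℤ) - 1 - (i.1 : ℤ) + 2 * e := by
    intro i
    rcases lt_trichotomy i.1 (q - 1) with h | h | h
    · refine ⟨b ⟨i.1, h⟩, ?_⟩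
      have h2 := hzb ⟨i.1, h⟩
      linarith [h2]
    · refine ⟨-c, ?_⟩
      have hv : (i.1 : ℤ) = (q : ℤ) - 1 := by clear hzb hzc hza hside; omega
      have hi : i = (⟨q - 1, by omega⟩ : Fin n) := Fin.ext h
      have h2 : z i + 2 * c = 0 := by rw [hi]; exact hzc
      linarith
    · have hj : i.1 - q < p - 1 := by have := i.isLt; omega
      refine ⟨-(a ⟨p - 2 - (i.1 - q), by omega⟩), ?_⟩
      have hv : ((i.1 - q : ℕ) : ℤ) = (i.1 : ℤ) - (q : ℤ) := by
        clear hzb hzc hza hside; omega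
      have h4 := hza ⟨i.1 - q, hj⟩
      have hi2 : (⟨q + (i.1 - q), by have := i.isLt; omega⟩ : Fin n) = i :=
        Fin.ext (show q + (i.1 - q) = i.1 by omega)
      rw [hi2] at h4
      linarith [h4, hv]
  choose e he using hA
  -- |z i| differs from z i by an even integer
  have hD : ∀ i : Fin n, ∃ d : ℤ, |z i| = z i + 2 * d := by
    intro i
    rcases abs_cases (z i) with ⟨h, _⟩ | ⟨h, _⟩
    · exact ⟨0, by omega⟩
    · exact ⟨-(z i), by omega⟩
  choose d hd using hD
  -- sums
  have hR : 2 * ∑ i ∈ Finset.range n, (i : ℤ) = (n : ℤ) * ((n : ℤ) - 1) := by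
    have hg := Finset.sum_range_id_mul_two n
    have h1 : ((∑ i ∈ Finset.range n, i : ℕ) : ℤ) * 2 = ((n * (n - 1) : ℕ) : ℤ) := by
      exact_mod_cast congrArg (fun t : ℕ => (t : ℤ)) hg
    push_cast [Nat.cast_sub hn1] at h1
    linarith
  have f3 : 2 * ∑ i : Fin n, ((i.1 : ℕ) : ℤ) = (n : ℤ) * ((n : ℤ) - 1) := by
    rw [Fin.sum_univ_eq_sum_range (fun i => (i : ℤ)) n]
    exact hR
  have f2 : ∑ i : Fin n, z i =
      (n : ℤ) * ((q : ℤ) - 1) - (∑ i : Fin n, ((i.1 : ℕ) : ℤ)) + 2 * ∑ i : Fin n, e i := by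
    have hc : (n : ℤ) * ((q : ℤ) - 1) = ∑ _i : Fin n, ((q : ℤ) - 1) := by
      rw [Finset.sum_const, Finset.card_univ, Fintype.card_fin, nsmul_eq_mul]
    rw [hc, Finset.mul_sum, ← Finset.sum_sub_distrib, ← Finset.sum_add_distrib]
    exact Finset.sum_congr rfl fun i _ => he i
  have f1 : ∑ i : Fin n, |z i| = (∑ i : Fin n, z i) + 2 * ∑ i : Fin n, d i := by
    rw [Finset.mul_sum, ← Finset.sum_add_distrib]
    exact Finset.sum_congr rfl fun i _ => hd i
  have hcard : (Finset.univ.image fun i => |z i|).card = n := by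
    rw [z_abs, Int.card_Icc]
    simp
  have hinj : Set.InjOn (fun i => |z i|) ↑(Finset.univ : Finset (Fin n)) := by
    apply Finset.injOn_of_card_image_eq
    rw [hcard, Finset.card_univ, Fintype.card_fin]
  have f4 : ∑ m ∈ Finset.Icc (1 : ℤ) (n : ℤ), m = ∑ i : Fin n, |z i| := by
    rw [← z_abs]
    exact Finset.sum_image fun x hx y hy h => hinj hx hy h
  have hIcc : Finset.Icc (1 : ℤ) (n : ℤ) =
      Finset.image (fun i : ℕ => (i : ℤ) + 1) (Finset.range n) := by
    ext m
    simp only [Finset.mem_Icc, Finset.mem_image, Finset.mem_range]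
    constructor
    · rintro ⟨h1, h2⟩
      exact ⟨(m - 1).toNat, by omega, by omega⟩
    · rintro ⟨i, hi, rfl⟩
      omega
  have f5 : 2 * ∑ m ∈ Finset.Icc (1 : ℤ) (n : ℤ), m = (n : ℤ) * ((n : ℤ) + 1) := by
    rw [hIcc, Finset.sum_image (by intro x _ y _ h; have h' : (x : ℤ) + 1 = (y : ℤ) + 1 := h; omega),
      Finset.sum_add_distrib, Finset.sum_const, Finset.card_range, nsmul_eq_mul, mul_one]
    linear_combination hR
  have hnp : (n : ℤ) = (p : ℤ) + (q : ℤ) - 1 := by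
    clear hzb hzc hza hside; omega
  have key : 2 * ((n : ℤ) * (p : ℤ)) =
      4 * ((∑ i : Fin n, e i) + (∑ i : Fin n, d i)) := by
    linear_combination (-1 : ℤ) * f5 + 2 * f4 + 2 * f1 + 2 * f2 - f3 - 2 * (n : ℤ) * hnp
  have hX : ((n : ℤ) * (p : ℤ)) % 2 = 1 := by
    have h1 : (n : ℤ) % 2 = 1 := by clear hzb hzc hza hside; omega
    have h2 : (p : ℤ) % 2 = 1 := by clear hzb hzc hza hside; omega
    rw [Int.mul_emod, h1, h2]; norm_num
  obtain ⟨X, Y, hXY, hX2⟩ : ∃ X Y : ℤ, 2 * X = 4 * Y ∧ X % 2 = 1 := ⟨_, _, key, hX⟩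
  omega

/-- Theorem on `X'(p,q;0,0)` with `p, q` odd: there are no solutions, i.e. the Dirac
cohomology of `X'(p,q;0,0)` vanishes (here `n = 2k−1`, `p + q = 2k`, `p, q` odd). -/
theorem stmt17 (n k p q : ℕ) (hk : 1 ≤ k) (hn : n = 2 * k - 1)
    (hppos : 0 < p) (hqpos : 0 < q) (hpq : p + q = 2 * k)
    (hpo : p % 2 = 1) (hqo : q % 2 = 1) :
    Nat.card (RhoSol00' n p q hppos hqpos (by omega)) = 0 := by
  haveI := rhoSol00'_isEmpty n p q hppos hqpos (by omega) hpo hqo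
  exact Nat.card_of_isEmpty
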